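/- Let A be an n×n symmetric positive definite matrix, b ∈ ℝⁿ, τ ≥ 0, and F(x) = (1/2)xᵀAx − bᵀx + τ‖x‖₁. For x ∈ ℝⁿ let I₀(x) = {i : xᵢ = 0}, J = {i : xᵢ ≠ 0}, H(x) = {y ∈ ℝⁿ : yᵢ = 0 for i ∈ I₀(x)}, and F*_x = min{F(y) : y ∈ H(x)}. Let v(x) be the minimum-norm subgradient of F at x. Then F(x) − F*_x ≤ (‖A⁻¹‖/2) ‖[v(x)]_J‖² for all x ∈ ℝⁿ. -/

import Mathlib

open Matrix Finset

/-- `f(x) = (1/2) xᵀAx − bᵀx`. -/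
noncomputable def quadObj {n : ℕ} (A : Matrix (Fin n) (Fin n) ℝ) (b : Fin n → ℝ)
    (x : Fin n → ℝ) : ℝ :=
  (1 / 2) * (x ⬝ᵥ A.mulVec x) - b ⬝ᵥ x

/-- `F(x) = (1/2) xᵀAx − bᵀx + τ‖x‖₁`. -/
noncomputable def l1QuadObj {n : ℕ} (A : Matrix (Fin n) (Fin n) ℝ) (b : Fin n → ℝ)
    (τ : ℝ) (x : Fin n → ℝ) : ℝ :=
  quadObj A b x + τ * ∑ i, |x i|

/-- The minimum-norm subgradient `v(x)` of `F`, given componentwise. -/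
noncomputable def minSubgrad {n : ℕ} (A : Matrix (Fin n) (Fin n) ℝ) (b : Fin n → ℝ)
    (τ : ℝ) (x : Fin n → ℝ) : Fin n → ℝ := fun i =>
  if x i ≠ 0 then (A.mulVec x - b) i + τ * Real.sign (x i)
  else min ((A.mulVec x - b) i + τ) (max 0 ((A.mulVec x - b) i - τ))

/-- `F*_x = min{F(y) : yᵢ = 0 whenever xᵢ = 0}`. -/
noncomputable def faceOpt {n : ℕ} (A : Matrix (Fin n) (Fin n) ℝ) (b : Fin n → ℝ)
    (τ : ℝ) (x : Fin n → ℝ) : ℝ :=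
  sInf (l1QuadObj A b τ '' {y | ∀ i, x i = 0 → y i = 0})

section aux

variable {n : ℕ}

lemma sym_dot {A : Matrix (Fin n) (Fin n) ℝ} (hs : Aᵀ = A) (u w : Fin n → ℝ) :
    u ⬝ᵥ A *ᵥ w = (A *ᵥ u) ⬝ᵥ w := by
  rw [Matrix.dotProduct_mulVec, ← Matrix.mulVec_transpose, hs]

lemma energy_lb {A : Matrix (Fin n) (Fin n) ℝ} (hA : A.PosDef) (v z : Fin n → ℝ) :
    -(1/2) * (v ⬝ᵥ A⁻¹ *ᵥ v) ≤ v ⬝ᵥ z + (1/2) * (z ⬝ᵥ A *ᵥ z) := by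
  have hs : Aᵀ = A := by
    have := hA.isHermitian
    simpa [Matrix.IsHermitian, Matrix.conjTranspose_eq_transpose_of_trivial] using this
  have hinv : A * A⁻¹ = 1 := Matrix.mul_nonsing_inv A (Matrix.isUnit_iff_isUnit_det A |>.1 hA.isUnit)
  set w := z + A⁻¹ *ᵥ v with hw
  have h0 : 0 ≤ w ⬝ᵥ A *ᵥ w := by
    have := hA.posSemidef.dotProduct_mulVec_nonneg w
    simpa using this
  have hAiv : A *ᵥ (A⁻¹ *ᵥ v) = v := by
    rw [Matrix.mulVec_mulVec, hinv, Matrix.one_mulVec]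
  have hexp : w ⬝ᵥ A *ᵥ w
      = z ⬝ᵥ A *ᵥ z + 2 * (v ⬝ᵥ z) + v ⬝ᵥ A⁻¹ *ᵥ v := by
    have cross : (A⁻¹ *ᵥ v) ⬝ᵥ A *ᵥ z = v ⬝ᵥ z := by
      rw [sym_dot hs, hAiv]
    have cross2 : z ⬝ᵥ A *ᵥ (A⁻¹ *ᵥ v) = v ⬝ᵥ z := by
      rw [hAiv, dotProduct_comm]
    have diag : (A⁻¹ *ᵥ v) ⬝ᵥ A *ᵥ (A⁻¹ *ᵥ v) = v ⬝ᵥ A⁻¹ *ᵥ v := by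
      rw [hAiv, dotProduct_comm]
    rw [hw]
    rw [Matrix.mulVec_add, dotProduct_add, add_dotProduct,
      add_dotProduct, cross, cross2, diag]
    ring
  nlinarith [h0, hexp]

lemma dot_inv_le {A : Matrix (Fin n) (Fin n) ℝ} (v : Fin n → ℝ) :
    v ⬝ᵥ A⁻¹ *ᵥ v ≤ ‖Matrix.toEuclideanCLM (𝕜 := ℝ) A⁻¹‖ * ∑ i, (v i)^2 := by
  set V : EuclideanSpace ℝ (Fin n) := (WithLp.equiv 2 (Fin n → ℝ)).symm v with hV
  have h1 : v ⬝ᵥ A⁻¹ *ᵥ v = inner ℝ (Matrix.toEuclideanCLM (𝕜 := ℝ) A⁻¹ V) V := by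
    rw [real_inner_comm, inner_toEuclideanCLM]
    simp [hV]
  have h2 : ‖V‖^2 = ∑ i, (v i)^2 := by
    rw [EuclideanSpace.real_norm_sq_eq]
    simp [hV]
  calc v ⬝ᵥ A⁻¹ *ᵥ v = inner ℝ (Matrix.toEuclideanCLM (𝕜 := ℝ) A⁻¹ V) V := h1
    _ ≤ ‖Matrix.toEuclideanCLM (𝕜 := ℝ) A⁻¹ V‖ * ‖V‖ := real_inner_le_norm _ _
    _ ≤ (‖Matrix.toEuclideanCLM (𝕜 := ℝ) A⁻¹‖ * ‖V‖) * ‖V‖ := by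
        gcongr; exact (Matrix.toEuclideanCLM (𝕜 := ℝ) A⁻¹).le_opNorm V
    _ = ‖Matrix.toEuclideanCLM (𝕜 := ℝ) A⁻¹‖ * ∑ i, (v i)^2 := by rw [mul_assoc, ← sq, h2]

end aux


/-- for `A` symmetric positive definite,
`F(x) − F*_x ≤ (‖A⁻¹‖/2) ‖[v(x)]_J‖²` with `J = supp(x)`,
where `‖A⁻¹‖` is the spectral norm of `A⁻¹`. -/
theorem stmt3 {n : ℕ} (A : Matrix (Fin n) (Fin n) ℝ) (b : Fin n → ℝ) (τ : ℝ)
    (hA : A.PosDef) (hτ : 0 ≤ τ) :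
    ∀ x : Fin n → ℝ,
      l1QuadObj A b τ x - faceOpt A b τ x ≤
        ‖Matrix.toEuclideanCLM (𝕜 := ℝ) A⁻¹‖ / 2 *
          ∑ i ∈ univ.filter (fun i => x i ≠ 0), (minSubgrad A b τ x i) ^ 2 := by
  intro x
  set v : Fin n → ℝ := fun i => if x i ≠ 0 then (A *ᵥ x - b) i + τ * Real.sign (x i) else 0
    with hv
  have hsum : ∑ i ∈ univ.filter (fun i => x i ≠ 0), (minSubgrad A b τ x i) ^ 2
      = ∑ i, (v i)^2 := by
    rw [Finset.sum_filter]
    apply Finset.sum_congr rfl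
    intro i _
    by_cases h : x i = 0 <;> simp [hv, minSubgrad, h]
  set C := ‖Matrix.toEuclideanCLM (𝕜 := ℝ) A⁻¹‖ with hC
  -- key lower bound on the face
  have key : ∀ y : Fin n → ℝ, (∀ i, x i = 0 → y i = 0) →
      l1QuadObj A b τ x - C / 2 * ∑ i, (v i)^2 ≤ l1QuadObj A b τ y := by
    intro y hy
    set z := y - x with hz
    have hz0 : ∀ i, x i = 0 → z i = 0 := fun i h => by
      simp [hz, hy i h, h]
    -- quadratic expansion
    have hquad : quadObj A b y = quadObj A b x + (A *ᵥ x - b) ⬝ᵥ z + (1/2) * (z ⬝ᵥ A *ᵥ z) := by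
      have hs : Aᵀ = A := by
        have := hA.isHermitian
        simpa [Matrix.IsHermitian, Matrix.conjTranspose_eq_transpose_of_trivial] using this
      have hyx : y = x + z := by simp [hz]
      have cross : z ⬝ᵥ A *ᵥ x = x ⬝ᵥ A *ᵥ z := by
        rw [sym_dot hs, dotProduct_comm]
      have cross2 : (A *ᵥ x) ⬝ᵥ z = x ⬝ᵥ A *ᵥ z := by
        rw [dotProduct_comm, cross]
      rw [quadObj, quadObj, hyx]
      simp only [Matrix.mulVec_add, dotProduct_add, add_dotProduct,
        sub_dotProduct]
      linarith [cross, cross2]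
    -- l1 lower bound
    have hl1 : τ * ∑ i, |x i| + ∑ i, (if x i ≠ 0 then τ * Real.sign (x i) * z i else 0)
        ≤ τ * ∑ i, |y i| := by
      rw [Finset.mul_sum, Finset.mul_sum, ← Finset.sum_add_distrib]
      apply Finset.sum_le_sum
      intro i _
      by_cases h : x i = 0
      · simp [h, hy i h]
      · simp only [h, if_pos, ne_eq, not_false_eq_true, if_true]
        have hsgn : Real.sign (x i) * x i = |x i| := by
          rcases lt_trichotomy (x i) 0 with hlt | heq | hgt
          · rw [Real.sign_of_neg hlt, abs_of_neg hlt]; ring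
          · exact absurd heq h
          · rw [Real.sign_of_pos hgt, abs_of_pos hgt]; ring
        have habs : Real.sign (x i) * y i ≤ |y i| := by
          rcases lt_trichotomy (x i) 0 with hlt | heq | hgt
          · rw [Real.sign_of_neg hlt]
            have := neg_abs_le (y i); nlinarith [neg_abs_le (y i)]
          · exact absurd heq h
          · rw [Real.sign_of_pos hgt]; simpa using le_abs_self (y i)
        have : τ * (Real.sign (x i) * y i) ≤ τ * |y i| := by
          exact mul_le_mul_of_nonneg_left habs hτ
        have hzz : z i = y i - x i := rfl
        have expand : τ * Real.sign (x i) * z i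
            = τ * (Real.sign (x i) * y i) - τ * (Real.sign (x i) * x i) := by
          rw [hzz]; ring
        have e2 : τ * (Real.sign (x i) * x i) = τ * |x i| := by rw [hsgn]
        linarith [expand, e2, this]
    -- combine dot products
    have hvz : v ⬝ᵥ z = (A *ᵥ x - b) ⬝ᵥ z + ∑ i, (if x i ≠ 0 then τ * Real.sign (x i) * z i else 0) := by
      rw [dotProduct, dotProduct, ← Finset.sum_add_distrib]
      apply Finset.sum_congr rfl
      intro i _
      by_cases h : x i = 0
      · simp [hv, h, hz0 i h]
      · simp [hv, h]; ring
    have hF : l1QuadObj A b τ x + v ⬝ᵥ z + (1/2) * (z ⬝ᵥ A *ᵥ z) ≤ l1QuadObj A b τ y := by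
      rw [l1QuadObj, l1QuadObj, hquad, hvz]
      linarith [hl1]
    have hE := energy_lb hA v z
    have hD := dot_inv_le (A := A) v
    calc l1QuadObj A b τ x - C / 2 * ∑ i, (v i)^2
        ≤ l1QuadObj A b τ x - (1/2) * (v ⬝ᵥ A⁻¹ *ᵥ v) := by
          rw [hC]; nlinarith [hD]
      _ ≤ l1QuadObj A b τ x + v ⬝ᵥ z + (1/2) * (z ⬝ᵥ A *ᵥ z) := by linarith [hE]
      _ ≤ l1QuadObj A b τ y := hF
  -- conclude via sInf
  rw [hsum]
  have hlb : l1QuadObj A b τ x - C / 2 * ∑ i, (v i)^2 ≤ faceOpt A b τ x := by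
    apply le_csInf
    · exact ⟨l1QuadObj A b τ x, x, fun i h => h, rfl⟩
    · rintro w ⟨y, hy, rfl⟩
      exact key y hy
  linarith [hlb]
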